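/- Let Γ, Γ′ ≤ I(ℝⁿ) be Bieberbach groups, let A ∈ GL(n, ℝ) and a ∈ ℝⁿ, and let f(x) := Ax + a. Suppose that conjugation by f maps Γ isomorphically onto Γ′ and preserves lengths, i.e., f Γ f⁻¹ = Γ′ and l(f γ f⁻¹) = l(γ) for every γ ∈ Γ. Then A ∈ O(n), so f is an isometry of ℝⁿ; in particular the flat manifolds Γ\ℝⁿ and Γ′\ℝⁿ are isometric. -/

import Mathlib

/-
STATEMENT 8: if conjugation by the affine bijection f(x) = Ax + a maps the Bieberbach
group Γ isomorphically onto Γ′ preserving lengths, then A ∈ O(n) and f is an isometry;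
in particular Γ\ℝⁿ and Γ′\ℝⁿ are isometric.
-/

noncomputable section

open scoped InnerProductSpace

/-- Euclidean `n`-space `ℝⁿ`. -/
abbrev Euc (n : ℕ) := EuclideanSpace ℝ (Fin n)

/-- The fixed subspace `ker (B - I)` of an orthogonal transformation `B ∈ O(n)`. -/
def fixSubmodule {n : ℕ} (B : Euc n ≃ₗᵢ[ℝ] Euc n) : Submodule ℝ (Euc n) :=
  LinearMap.ker ((B.toLinearEquiv : Euc n →ₗ[ℝ] Euc n) - LinearMap.id)

/-- `p_B`, the orthogonal projection of `ℝⁿ` onto `ker (B - I)`. -/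
def pB {n : ℕ} (B : Euc n ≃ₗᵢ[ℝ] Euc n) (x : Euc n) : Euc n :=
  (Submodule.orthogonalProjectionOnto (fixSubmodule B) x : Euc n)

/-- `Λ` is a full lattice in `ℝⁿ`: the `ℤ`-span of an `ℝ`-basis of `ℝⁿ`. -/
def IsFullLattice {n : ℕ} (Λ : AddSubgroup (Euc n)) : Prop :=
  ∃ v : Module.Basis (Fin n) ℝ (Euc n),
    (Λ : Set (Euc n)) = (Submodule.span ℤ (Set.range ⇑v) : Set (Euc n))

/-- An isometry of `ℝⁿ`, recorded by its orthogonal (rotational) part `B ∈ O(n)` and its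
translational part `b ∈ ℝⁿ`; it acts by `x ↦ B x + b`, i.e. it is `B L_b`. -/
structure Iso (n : ℕ) where
  B : Euc n ≃ₗᵢ[ℝ] Euc n
  b : Euc n

namespace Iso

variable {n : ℕ}

/-- The action of the isometry `B L_b` on `ℝⁿ`: `x ↦ B x + b`. -/
def toFun (g : Iso n) : Euc n → Euc n := fun x => g.B x + g.b

/-- Composition of isometries: `(B L_b) (C L_c) = (B C) L_{B c + b}`. -/
def mul' (g h : Iso n) : Iso n := ⟨h.B.trans g.B, g.B h.b + g.b⟩

/-- The identity isometry. -/
def one' : Iso n := ⟨LinearIsometryEquiv.refl ℝ (Euc n), 0⟩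

/-- The inverse isometry: `(B L_b)⁻¹ = B⁻¹ L_{-B⁻¹ b}`. -/
def inv' (g : Iso n) : Iso n := ⟨g.B.symm, -(g.B.symm g.b)⟩

/-- The isometry group `I(ℝⁿ)`, with composition as multiplication. -/
instance : Group (Iso n) where
  mul := mul'
  one := one'
  inv := inv'
  mul_assoc a b c := by
    show mul' (mul' a b) c = mul' a (mul' b c)
    unfold mul'
    simp only [mk.injEq]
    exact ⟨by ext x; simp, by simp [add_assoc]⟩
  one_mul a := by
    show mul' one' a = a
    cases a; simp only [mul', one', mk.injEq]
    exact ⟨by ext x; simp, by simp⟩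
  mul_one a := by
    show mul' a one' = a
    cases a; simp only [mul', one', mk.injEq]
    exact ⟨by ext x; simp, by simp⟩
  inv_mul_cancel a := by
    show mul' (inv' a) a = one'
    simp only [mul', inv', one', mk.injEq]
    exact ⟨by ext x; simp, by simp⟩

/-- The translation `L_v : x ↦ x + v`, as an element of `I(ℝⁿ)`. -/
def transl (v : Euc n) : Iso n := ⟨LinearIsometryEquiv.refl ℝ (Euc n), v⟩

/-- The length `l(γ) := ‖b₊‖` of the isometry `γ = B L_b`, where `b₊ = p_B b`. -/
def len (g : Iso n) : ℝ := ‖pB g.B g.b‖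

end Iso

/-- The subgroup of pure translations inside a group `Γ ≤ I(ℝⁿ)` of isometries. -/
def translSubgroup {n : ℕ} (Γ : Subgroup (Iso n)) : Subgroup ↥Γ where
  carrier := {g | (g : Iso n).B = LinearIsometryEquiv.refl ℝ (Euc n)}
  mul_mem' := by
    intro a b ha hb
    show ((a : Iso n) * (b : Iso n)).B = _
    show ((b : Iso n)).B.trans ((a : Iso n)).B = _
    rw [Set.mem_setOf_eq] at ha hb
    rw [ha, hb]
    ext x; simp
  one_mem' := by
    show ((1 : Iso n)).B = _
    rfl
  inv_mem' := by
    intro a ha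
    show ((a : Iso n)⁻¹).B = _
    show ((a : Iso n)).B.symm = _
    rw [Set.mem_setOf_eq] at ha
    rw [ha]
    rfl

/-- `Γ` is a crystallographic group with translation lattice `Λ`:  `Λ` is a full
lattice, the translations contained in `Γ` are exactly the `L_λ` with `λ ∈ Λ`, the
translation subgroup `L_Λ` has finite index in `Γ`, and `Λ` is stable under the
rotational part of every element of `Γ`. -/
structure IsCrystallographic {n : ℕ} (Γ : Subgroup (Iso n))
    (Λ : AddSubgroup (Euc n)) : Prop where
  full : IsFullLattice Λ
  transl_mem_iff : ∀ v : Euc n, Iso.transl v ∈ Γ ↔ v ∈ Λ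
  finiteIndex : (translSubgroup Γ).FiniteIndex
  stable : ∀ g ∈ Γ, ∀ v ∈ Λ, (Iso.B g) v ∈ Λ

/-- `Γ` is a Bieberbach group: a torsion-free crystallographic group. -/
structure IsBieberbach {n : ℕ} (Γ : Subgroup (Iso n))
    (Λ : AddSubgroup (Euc n)) extends IsCrystallographic Γ Λ : Prop where
  torsionFree : ∀ g : ↥Γ, IsOfFinOrder g → g = 1

/-- The holonomy group `F = Λ\Γ`. -/
def Hol {n : ℕ} (Γ : Subgroup (Iso n)) : Type _ := ↥Γ ⧸ translSubgroup Γ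

/-- A set-theoretic representative `B L_b ∈ Γ` of a coset in `F = Λ\Γ`. -/
def Hol.rep {n : ℕ} {Γ : Subgroup (Iso n)} (c : Hol Γ) : Iso n :=
  ((Quotient.out (c : ↥Γ ⧸ translSubgroup Γ) : ↥Γ) : Iso n)


/-- The length `‖p_M t‖` of an affine bijection with linear part `M` and translational
part `t`, where `p_M` is the orthogonal projection onto `ker (M - I)`. -/
noncomputable def lenAff {n : ℕ} (M : Euc n →ₗ[ℝ] Euc n) (t : Euc n) : ℝ :=
  ‖(Submodule.orthogonalProjectionOnto (LinearMap.ker (M - LinearMap.id)) t : Euc n)‖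

theorem isometric_of_marked_length_preserving_conjugation
    {n : ℕ} (Γ Γ' : Subgroup (Iso n)) (Λ Λ' : AddSubgroup (Euc n))
    (hΓ : IsBieberbach Γ Λ) (hΓ' : IsBieberbach Γ' Λ')
    (A : Euc n ≃ₗ[ℝ] Euc n) (a : Euc n)
    (hconj : ∀ g : Iso n, g ∈ Γ' ↔
      ∃ γ ∈ Γ, ∀ x : Euc n, Iso.toFun g x = A (Iso.toFun γ (A.symm (x - a))) + a)
    (hlen : ∀ γ ∈ Γ,
      lenAff (A.toLinearMap ∘ₗ ((Iso.B γ).toLinearEquiv : Euc n →ₗ[ℝ] Euc n)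
          ∘ₗ A.symm.toLinearMap)
        (a + A (Iso.b γ) - A ((Iso.B γ) (A.symm a))) = Iso.len γ) :
    (∀ x : Euc n, ‖A x‖ = ‖x‖) ∧ Isometry (fun x : Euc n => A x + a) := by
  classical
  -- Step 1: norms are preserved on the lattice Λ.
  have hnorm : ∀ v ∈ Λ, ‖A v‖ = ‖v‖ := by
    intro v hv
    have hmem : Iso.transl v ∈ Γ := (hΓ.transl_mem_iff v).mpr hv
    have h := hlen _ hmem
    have hB : Iso.B (Iso.transl v) = LinearIsometryEquiv.refl ℝ (Euc n) := rfl
    have hb : Iso.b (Iso.transl v) = v := rfl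
    rw [hB, hb] at h
    -- the translational part of the conjugate is A v
    have ht : a + A v - A ((LinearIsometryEquiv.refl ℝ (Euc n)) (A.symm a)) = A v := by
      simp
    rw [ht] at h
    -- LHS simplifies to ‖A v‖
    set M : Euc n →ₗ[ℝ] Euc n :=
      A.toLinearMap ∘ₗ (((LinearIsometryEquiv.refl ℝ (Euc n)).toLinearEquiv :
        Euc n →ₗ[ℝ] Euc n)) ∘ₗ A.symm.toLinearMap with hM
    have hker : A v ∈ LinearMap.ker (M - LinearMap.id) := by
      simp [hM, LinearMap.mem_ker, LinearMap.sub_apply]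
    have hL : lenAff M (A v) = ‖A v‖ := by
      unfold lenAff
      rw [Submodule.orthogonalProjectionOnto_mem_subspace_eq_self ⟨_, hker⟩]
    -- RHS simplifies to ‖v‖
    have hker' : v ∈ fixSubmodule (LinearIsometryEquiv.refl ℝ (Euc n)) := by
      simp [fixSubmodule, LinearMap.mem_ker, LinearMap.sub_apply]
    have hR : Iso.len (Iso.transl v) = ‖v‖ := by
      unfold Iso.len pB
      rw [hB, hb, Submodule.orthogonalProjectionOnto_mem_subspace_eq_self ⟨_, hker'⟩]
    rw [hL, hR] at h
    exact h
  -- Step 2: the quadratic defect vanishes on Λ.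
  have hQ : ∀ v ∈ Λ, ‖A v‖ ^ 2 - ‖v‖ ^ 2 = 0 := by
    intro v hv; rw [hnorm v hv]; ring
  -- Step 3: the bilinear defect vanishes everywhere.
  obtain ⟨v, hvΛ⟩ := hΓ.full
  have hvmem : ∀ i, v i ∈ Λ := by
    intro i
    have : v i ∈ (Submodule.span ℤ (Set.range ⇑v) : Set (Euc n)) :=
      Submodule.subset_span (Set.mem_range_self i)
    rw [← hvΛ] at this
    exact this
  set Φ : LinearMap.BilinForm ℝ (Euc n) :=
    ((innerₗ (Euc n)).compl₁₂ A.toLinearMap A.toLinearMap) - innerₗ (Euc n)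
    with hΦdef
  have hΦapp : ∀ x y : Euc n, Φ x y = ⟪A x, A y⟫_ℝ - ⟪x, y⟫_ℝ := by
    intro x y
    simp [hΦdef, LinearMap.compl₁₂_apply, innerₗ_apply_apply]
  have hΦpolar : ∀ x y : Euc n,
      2 * Φ x y = (‖A (x + y)‖ ^ 2 - ‖x + y‖ ^ 2) - (‖A x‖ ^ 2 - ‖x‖ ^ 2)
        - (‖A y‖ ^ 2 - ‖y‖ ^ 2) := by
    intro x y
    rw [hΦapp, map_add, norm_add_sq_real (A x) (A y), norm_add_sq_real x y]
    ring
  have hΦzero : Φ = 0 := by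
    apply Module.Basis.ext v
    intro i
    apply Module.Basis.ext v
    intro j
    have h2 : 2 * Φ (v i) (v j) = 0 := by
      rw [hΦpolar, hQ _ (hvmem i), hQ _ (hvmem j),
        hQ _ (Λ.add_mem (hvmem i) (hvmem j))]
      ring
    have : Φ (v i) (v j) = 0 := by linarith
    simpa using this
  have hA : ∀ x : Euc n, ‖A x‖ = ‖x‖ := by
    intro x
    have h0 : Φ x x = 0 := by rw [hΦzero]; simp
    rw [hΦapp, real_inner_self_eq_norm_sq, real_inner_self_eq_norm_sq,
      sub_eq_zero] at h0
    exact (sq_eq_sq₀ (norm_nonneg (A x)) (norm_nonneg x)).mp h0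
  refine ⟨hA, ?_⟩
  apply Isometry.of_dist_eq
  intro x y
  have : A x + a - (A y + a) = A (x - y) := by
    rw [map_sub]; abel
  rw [dist_eq_norm, dist_eq_norm, this, hA]
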